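/- Let x be a complex n×n matrix and λ an eigenvalue of x with |λ| = ρ(x). Let y be a matrix with ρ(y) ≤ |λ| and ρ(y + λI) = 2|λ|. Then λ is an eigenvalue of y. -/

import Mathlib

noncomputable def specRad (n : ℕ) (x : Matrix (Fin n) (Fin n) ℂ) : ℝ :=
  sSup ((fun z : ℂ => ‖z‖) '' spectrum ℂ x)

theorem stmt_11 (n : ℕ) (x y : Matrix (Fin n) (Fin n) ℂ) (lam : ℂ)
    (hlam : lam ∈ spectrum ℂ x) (hmax : ‖lam‖ = specRad n x)
    (hy : specRad n y ≤ ‖lam‖)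
    (hsum : specRad n (y + lam • (1 : Matrix (Fin n) (Fin n) ℂ)) = 2 * ‖lam‖) :
    lam ∈ spectrum ℂ y := by
  rcases Nat.eq_zero_or_pos n with hn | hn
  · subst hn
    exact absurd (isUnit_of_subsingleton _) (spectrum.mem_iff.mp hlam)
  haveI : Nonempty (Fin n) := ⟨⟨0, hn⟩⟩
  set z : Matrix (Fin n) (Fin n) ℂ := y + lam • (1 : Matrix (Fin n) (Fin n) ℂ) with hz
  have hz' : z = algebraMap ℂ (Matrix (Fin n) (Fin n) ℂ) lam + y := by
    rw [hz, Algebra.algebraMap_eq_smul_one, add_comm]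
  have hfin : (spectrum ℂ z).Finite := Matrix.finite_spectrum _
  have hne : (spectrum ℂ z).Nonempty :=
    spectrum.nonempty_of_isAlgClosed_of_finiteDimensional ℂ _
  have hmem : sSup ((fun z : ℂ => ‖z‖) '' spectrum ℂ z) ∈ (fun z : ℂ => ‖z‖) '' spectrum ℂ z :=
    (hne.image _).csSup_mem (hfin.image _)
  rw [show sSup ((fun z : ℂ => ‖z‖) '' spectrum ℂ z) = specRad n z from rfl, hsum] at hmem
  obtain ⟨β, hβ, habsβ⟩ := hmem
  rw [hz', ← spectrum.singleton_add_eq] at hβ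
  obtain ⟨a, ha, α, hα, rfl⟩ := Set.mem_add.mp hβ
  rw [Set.mem_singleton_iff] at ha
  rw [ha] at habsβ
  -- bound on |α|
  have hαle : ‖α‖ ≤ ‖lam‖ := by
    refine le_trans ?_ hy
    exact le_csSup ((Matrix.finite_spectrum y).image _).bddAbove ⟨α, hα, rfl⟩
  -- triangle equality
  have htri : ‖lam + α‖ ≤ ‖lam‖ + ‖α‖ := norm_add_le _ _
  have h2 : ‖lam + α‖ = 2 * ‖lam‖ := habsβ
  have hnorm : ‖α‖ = ‖lam‖ := by
    have : ‖α‖ ≤ ‖lam‖ := hαle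
    nlinarith [htri, h2]
  have hadd : ‖α + lam‖ = ‖α‖ + ‖lam‖ := by
    rw [add_comm, h2, hnorm]; ring
  have : α = lam := eq_of_norm_eq_of_norm_add_eq hnorm hadd
  rwa [this] at hα
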